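/- The finite ordinals as objects, with Brauerian split equivalences R : m ⊢ n as arrows, composition ∗, and the identity on n being the split equivalence whose classes are {m_s, m_t} for m < n, form a category Br: composition ∗ is associative and the identities are neutral for ∗. -/

import Mathlib

/-- A relation is *Brauerian* when every equivalence class of the corresponding
partition has exactly two elements. -/
def IsBrauerian {α : Type*} (R : α → α → Prop) : Prop :=
  ∀ a, ∃ b, b ≠ a ∧ R a b ∧ ∀ c, R a c → c = a ∨ c = b

/-- The composition `P ∗ R` of split relations `R : X ⊢ Y` and `P : Y ⊢ Z`,
defined as `Tr(R^{-t} ∪ P^{-s}) ∩ (X^s ∪ Z^t)²`. -/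
def splitComp {α β γ : Type*} (Pr : β ⊕ γ → β ⊕ γ → Prop)
    (R : α ⊕ β → α ⊕ β → Prop) : α ⊕ γ → α ⊕ γ → Prop := fun u v =>
  Relation.TransGen
    (fun x y : α ⊕ β ⊕ γ =>
      (∃ x' y', Sum.map id Sum.inl x' = x ∧ Sum.map id Sum.inl y' = y ∧ R x' y') ∨
      (∃ x' y', Sum.inr x' = x ∧ Sum.inr y' = y ∧ Pr x' y'))
    (Sum.map id Sum.inr u) (Sum.map id Sum.inr v)

/-- A Brauerian split equivalence `m ⊢ n` of finite ordinals. -/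
def IsBrSplitEquiv {m n : ℕ} (R : Fin m ⊕ Fin n → Fin m ⊕ Fin n → Prop) : Prop :=
  Equivalence R ∧ IsBrauerian R

/-- The identity arrow of `Br` on `n`: its partition classes are `{m_s, m_t}` for `m < n`. -/
def brId (n : ℕ) : Fin n ⊕ Fin n → Fin n ⊕ Fin n → Prop :=
  fun u v => Sum.elim id id u = Sum.elim id id v


lemma descend {E F : Type*} {I : E → E → Prop} {IF : F → F → Prop} {k : F → E}
    (hk : Function.Injective k)
    (h : ∀ x y, I x y → ∃ xf yf, k xf = x ∧ k yf = y ∧ IF xf yf) :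
    ∀ {x y}, Relation.TransGen I x y → ∀ xf, k xf = x →
      ∃ yf, k yf = y ∧ Relation.TransGen IF xf yf := by
  intro x y hxy
  induction hxy using Relation.TransGen.head_induction_on with
  | single hstep =>
    intro xf hxf
    obtain ⟨xf', yf, hx', hy', hIF⟩ := h _ _ hstep
    cases hk (hx'.trans hxf.symm)
    exact ⟨yf, hy', .single hIF⟩
  | head hstep _ IH =>
    intro xf hxf
    obtain ⟨xf', zf, hx', hz', hIF⟩ := h _ _ hstep
    cases hk (hx'.trans hxf.symm)
    obtain ⟨yf, hy', htg⟩ := IH zf hz'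
    exact ⟨yf, hy', htg.head hIF⟩

lemma collapse_aux {E G : Type*} {S I : E → E → Prop} {T : G → G → Prop} {j : G → E}
    {Hid : E → Prop}
    (hclass : ∀ z : E, (∃ z₀, j z₀ = z) ∨ Hid z)
    (hTT : ∀ x z, S x z → ∀ x₀ z₀, j x₀ = x → j z₀ = z → T x₀ z₀)
    (hHI : ∀ x z, S x z → (Hid x ∨ Hid z) → I x z)
    (hcol : ∀ x₀ w, Relation.TransGen I (j x₀) (j w) → T x₀ w)
    {y₀ : G} {x : E} (h : Relation.TransGen S x (j y₀)) :
    (∀ x₀, j x₀ = x → Relation.TransGen T x₀ y₀) ∧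
    (Hid x → ∃ w, Relation.TransGen I x (j w) ∧ Relation.ReflTransGen T w y₀) := by
  induction h using Relation.TransGen.head_induction_on with
  | single hstep =>
    constructor
    · intro x₀ hx
      exact .single (hTT _ _ hstep x₀ y₀ hx rfl)
    · intro hx
      exact ⟨y₀, .single (hHI _ _ hstep (Or.inl hx)), .refl⟩
  | @head x z hxz hzy IH =>
    constructor
    · intro x₀ hx
      rcases hclass z with ⟨z₀, hz⟩ | hz
      · exact (IH.1 z₀ hz).head (hTT _ _ hxz x₀ z₀ hx hz)
      · obtain ⟨w, hIw, hTw⟩ := IH.2 hz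
        have h1 : Relation.TransGen I (j x₀) (j w) := by
          rw [hx]; exact hIw.head (hHI _ _ hxz (Or.inr hz))
        exact Relation.TransGen.trans_left (.single (hcol x₀ w h1)) hTw
    · intro hx
      rcases hclass z with ⟨z₀, hz⟩ | hz
      · refine ⟨z₀, ?_, (IH.1 z₀ hz).to_reflTransGen⟩
        rw [hz]; exact .single (hHI _ _ hxz (Or.inl hx))
      · obtain ⟨w, hIw, hTw⟩ := IH.2 hz
        exact ⟨w, hIw.head (hHI _ _ hxz (Or.inr hz)), hTw⟩

lemma sandwich {E G : Type*} {S I : E → E → Prop} {T : G → G → Prop} {j : G → E}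
    {Hid : E → Prop}
    (hclass : ∀ z : E, (∃ z₀, j z₀ = z) ∨ Hid z)
    (hTT : ∀ x z, S x z → ∀ x₀ z₀, j x₀ = x → j z₀ = z → T x₀ z₀)
    (hHI : ∀ x z, S x z → (Hid x ∨ Hid z) → I x z)
    (hcol : ∀ x₀ w, Relation.TransGen I (j x₀) (j w) → T x₀ w)
    (hlift : ∀ x₀ y₀, T x₀ y₀ → Relation.TransGen S (j x₀) (j y₀)) :
    ∀ u v, Relation.TransGen T u v ↔ Relation.TransGen S (j u) (j v) := by
  intro u v
  constructor
  · exact Relation.TransGen.lift' j hlift u v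
  · intro h
    exact (collapse_aux hclass hTT hHI hcol h).1 u rfl

section Assoc
variable {α β γ δ : Type*} (R : α ⊕ β → α ⊕ β → Prop) (Pr : β ⊕ γ → β ⊕ γ → Prop)
  (Q : γ ⊕ δ → γ ⊕ δ → Prop)

def bigStep : (α ⊕ (β ⊕ (γ ⊕ δ))) → (α ⊕ (β ⊕ (γ ⊕ δ))) → Prop := fun x y =>
  (∃ x' y' : α ⊕ β, Sum.map id Sum.inl x' = x ∧ Sum.map id Sum.inl y' = y ∧ R x' y') ∨
  (∃ x' y' : β ⊕ γ, Sum.inr (Sum.map id Sum.inl x') = x ∧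
      Sum.inr (Sum.map id Sum.inl y') = y ∧ Pr x' y') ∨
  (∃ x' y' : γ ⊕ δ, Sum.inr (Sum.inr x') = x ∧ Sum.inr (Sum.inr y') = y ∧ Q x' y')

def stepL : (α ⊕ (γ ⊕ δ)) → (α ⊕ (γ ⊕ δ)) → Prop := fun x y =>
  (∃ x' y' : α ⊕ γ, Sum.map id Sum.inl x' = x ∧ Sum.map id Sum.inl y' = y ∧
      splitComp Pr R x' y') ∨
  (∃ x' y' : γ ⊕ δ, Sum.inr x' = x ∧ Sum.inr y' = y ∧ Q x' y')

def innerL : (α ⊕ (β ⊕ γ)) → (α ⊕ (β ⊕ γ)) → Prop := fun x y =>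
  (∃ x' y' : α ⊕ β, Sum.map id Sum.inl x' = x ∧ Sum.map id Sum.inl y' = y ∧ R x' y') ∨
  (∃ x' y' : β ⊕ γ, Sum.inr x' = x ∧ Sum.inr y' = y ∧ Pr x' y')

def innL : (α ⊕ (β ⊕ (γ ⊕ δ))) → (α ⊕ (β ⊕ (γ ⊕ δ))) → Prop := fun x y =>
  (∃ x' y' : α ⊕ β, Sum.map id Sum.inl x' = x ∧ Sum.map id Sum.inl y' = y ∧ R x' y') ∨
  (∃ x' y' : β ⊕ γ, Sum.inr (Sum.map id Sum.inl x') = x ∧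
      Sum.inr (Sum.map id Sum.inl y') = y ∧ Pr x' y')

def kL : (α ⊕ (β ⊕ γ)) → (α ⊕ (β ⊕ (γ ⊕ δ))) := Sum.map id (Sum.map id Sum.inl)

lemma kL_inj : Function.Injective (kL (α := α) (β := β) (γ := γ) (δ := δ)) :=
  Function.injective_id.sumMap (Function.injective_id.sumMap Sum.inl_injective)

lemma innL_descend : ∀ x y, innL R Pr x y →
    ∃ xf yf, kL (δ := δ) xf = x ∧ kL yf = y ∧ innerL R Pr xf yf := by
  rintro x y (⟨x', y', hx, hy, hR⟩ | ⟨x', y', hx, hy, hP⟩)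
  · exact ⟨Sum.map id Sum.inl x', Sum.map id Sum.inl y',
      by rw [← hx]; cases x' <;> rfl, by rw [← hy]; cases y' <;> rfl,
      Or.inl ⟨x', y', rfl, rfl, hR⟩⟩
  · exact ⟨Sum.inr x', Sum.inr y', by rw [← hx]; rfl, by rw [← hy]; rfl,
      Or.inr ⟨x', y', rfl, rfl, hP⟩⟩

lemma hclassL : ∀ z : α ⊕ (β ⊕ (γ ⊕ δ)),
    (∃ z₀ : α ⊕ (γ ⊕ δ), Sum.map id Sum.inr z₀ = z) ∨ (∃ b : β, Sum.inr (Sum.inl b) = z) := by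
  rintro (a | b | w)
  · exact Or.inl ⟨Sum.inl a, rfl⟩
  · exact Or.inr ⟨b, rfl⟩
  · exact Or.inl ⟨Sum.inr w, rfl⟩

lemma hTTL : ∀ x z, bigStep R Pr Q x z → ∀ (x₀ z₀ : α ⊕ (γ ⊕ δ)),
    Sum.map id Sum.inr x₀ = x → Sum.map id Sum.inr z₀ = z → stepL R Pr Q x₀ z₀ := by
  rintro x z (⟨x', y', rfl, rfl, hR⟩ | ⟨x', y', rfl, rfl, hP⟩ | ⟨x', y', rfl, rfl, hQ⟩) x₀ z₀ hx hz
  · rcases x' with a | b <;> rcases y' with a' | b' <;>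
      rcases x₀ with a0 | c0 | d0 <;> rcases z₀ with a1 | c1 | d1 <;> simp_all
    exact Or.inl ⟨Sum.inl a, Sum.inl a', rfl, rfl,
      Relation.TransGen.single (Or.inl ⟨Sum.inl a, Sum.inl a', rfl, rfl, hR⟩)⟩
  · rcases x' with b | c <;> rcases y' with b' | c' <;>
      rcases x₀ with a0 | c0 | d0 <;> rcases z₀ with a1 | c1 | d1 <;> simp_all
    exact Or.inl ⟨Sum.inr c, Sum.inr c', rfl, rfl,
      Relation.TransGen.single (Or.inr ⟨Sum.inr c, Sum.inr c', rfl, rfl, hP⟩)⟩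
  · rcases x' with c | d <;> rcases y' with c' | d' <;>
      rcases x₀ with a0 | c0 | d0 <;> rcases z₀ with a1 | c1 | d1 <;> simp_all
    · exact Or.inr ⟨Sum.inl c, Sum.inl c', rfl, rfl, hQ⟩
    · exact Or.inr ⟨Sum.inl c, Sum.inr d', rfl, rfl, hQ⟩
    · exact Or.inr ⟨Sum.inr d, Sum.inl c', rfl, rfl, hQ⟩
    · exact Or.inr ⟨Sum.inr d, Sum.inr d', rfl, rfl, hQ⟩

lemma hHIL : ∀ x z, bigStep R Pr Q x z →
    ((∃ b : β, Sum.inr (Sum.inl b) = x) ∨ (∃ b : β, Sum.inr (Sum.inl b) = z)) →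
    innL R Pr x z := by
  rintro x z (⟨x', y', rfl, rfl, hR⟩ | ⟨x', y', rfl, rfl, hP⟩ | ⟨x', y', rfl, rfl, hQ⟩) hid
  · exact Or.inl ⟨x', y', rfl, rfl, hR⟩
  · exact Or.inr ⟨x', y', rfl, rfl, hP⟩
  · exfalso; rcases hid with ⟨b, hb⟩ | ⟨b, hb⟩ <;> simp at hb

lemma hcolL : ∀ (x₀ w : α ⊕ (γ ⊕ δ)),
    Relation.TransGen (innL R Pr) (Sum.map id Sum.inr x₀) (Sum.map id Sum.inr w) →
    stepL R Pr Q x₀ w := by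
  intro x₀ w h
  obtain ⟨x', rfl, hjx⟩ : ∃ x' : α ⊕ γ, x₀ = Sum.map id Sum.inl x' ∧
      Sum.map id Sum.inr x₀ = kL (δ := δ) (Sum.map id Sum.inr x') := by
    rcases x₀ with a | c | d
    · exact ⟨Sum.inl a, rfl, rfl⟩
    · exact ⟨Sum.inr c, rfl, rfl⟩
    · exfalso
      obtain ⟨zz, hstep, -⟩ := Relation.TransGen.head'_iff.1 h
      rcases hstep with ⟨x'', y'', hx, -, -⟩ | ⟨x'', y'', hx, -, -⟩ <;>
        rcases x'' with u | u <;> simp at hx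
  obtain ⟨yf, hyf, htg⟩ := descend (kL_inj) (innL_descend R Pr) h (Sum.map id Sum.inr x') hjx.symm
  obtain ⟨w', rfl, rfl⟩ : ∃ w' : α ⊕ γ, w = Sum.map id Sum.inl w' ∧ yf = Sum.map id Sum.inr w' := by
    rcases w with a | c | d
    · refine ⟨Sum.inl a, rfl, ?_⟩
      rcases yf with a0 | b0 | c0 <;> simp_all [kL]
    · refine ⟨Sum.inr c, rfl, ?_⟩
      rcases yf with a0 | b0 | c0 <;> simp_all [kL]
    · exfalso; rcases yf with a0 | b0 | c0 <;> simp_all [kL]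
  exact Or.inl ⟨x', w', rfl, rfl, htg⟩

lemma hliftL : ∀ x₀ y₀ : α ⊕ (γ ⊕ δ), stepL R Pr Q x₀ y₀ →
    Relation.TransGen (bigStep R Pr Q) (Sum.map id Sum.inr x₀) (Sum.map id Sum.inr y₀) := by
  rintro x₀ y₀ (⟨x', y', rfl, rfl, hS⟩ | ⟨x', y', rfl, rfl, hQ⟩)
  · have hS' : Relation.TransGen (innerL R Pr) (Sum.map id Sum.inr x') (Sum.map id Sum.inr y') := hS
    have hmain : Relation.TransGen (bigStep R Pr Q)
        (kL (Sum.map id Sum.inr x')) (kL (Sum.map id Sum.inr y')) := by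
      refine Relation.TransGen.lift' kL ?_ _ _ hS'
      rintro a b (⟨x'', y'', rfl, rfl, hR⟩ | ⟨x'', y'', rfl, rfl, hP⟩)
      · exact .single (Or.inl ⟨x'', y'', by cases x'' <;> rfl, by cases y'' <;> rfl, hR⟩)
      · exact .single (Or.inr (Or.inl ⟨x'', y'', rfl, rfl, hP⟩))
    have e1 : kL (β := β) (δ := δ) (Sum.map id Sum.inr x') =
        Sum.map id Sum.inr (Sum.map id Sum.inl x' : α ⊕ (γ ⊕ δ)) := by cases x' <;> rfl
    have e2 : kL (β := β) (δ := δ) (Sum.map id Sum.inr y') =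
        Sum.map id Sum.inr (Sum.map id Sum.inl y' : α ⊕ (γ ⊕ δ)) := by cases y' <;> rfl
    rwa [e1, e2] at hmain
  · exact .single (Or.inr (Or.inr ⟨x', y', rfl, rfl, hQ⟩))
end Assoc

section Assoc2
variable {α β γ δ : Type*} (R : α ⊕ β → α ⊕ β → Prop) (Pr : β ⊕ γ → β ⊕ γ → Prop)
  (Q : γ ⊕ δ → γ ⊕ δ → Prop)

lemma lhs_iff (u v : α ⊕ δ) : splitComp Q (splitComp Pr R) u v ↔
    Relation.TransGen (bigStep R Pr Q)
      (Sum.map id (fun d => Sum.inr (Sum.inr d)) u)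
      (Sum.map id (fun d => Sum.inr (Sum.inr d)) v) := by
  have hs := sandwich (S := bigStep R Pr Q) (I := innL R Pr) (T := stepL R Pr Q)
    (j := Sum.map id Sum.inr) (Hid := fun z => ∃ b : β, Sum.inr (Sum.inl b) = z)
    (hclassL) (hTTL R Pr Q) (hHIL R Pr Q) (hcolL R Pr Q) (hliftL R Pr Q)
    (Sum.map id Sum.inr u) (Sum.map id Sum.inr v)
  have e1 : (Sum.map id Sum.inr (Sum.map id Sum.inr u) : α ⊕ (β ⊕ (γ ⊕ δ))) =
      Sum.map id (fun d => Sum.inr (Sum.inr d)) u := by cases u <;> rfl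
  have e2 : (Sum.map id Sum.inr (Sum.map id Sum.inr v) : α ⊕ (β ⊕ (γ ⊕ δ))) =
      Sum.map id (fun d => Sum.inr (Sum.inr d)) v := by cases v <;> rfl
  rw [e1, e2] at hs
  exact hs

def stepR : (α ⊕ (β ⊕ δ)) → (α ⊕ (β ⊕ δ)) → Prop := fun x y =>
  (∃ x' y' : α ⊕ β, Sum.map id Sum.inl x' = x ∧ Sum.map id Sum.inl y' = y ∧ R x' y') ∨
  (∃ x' y' : β ⊕ δ, Sum.inr x' = x ∧ Sum.inr y' = y ∧ splitComp Q Pr x' y')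

def innerR : (β ⊕ (γ ⊕ δ)) → (β ⊕ (γ ⊕ δ)) → Prop := fun x y =>
  (∃ x' y' : β ⊕ γ, Sum.map id Sum.inl x' = x ∧ Sum.map id Sum.inl y' = y ∧ Pr x' y') ∨
  (∃ x' y' : γ ⊕ δ, Sum.inr x' = x ∧ Sum.inr y' = y ∧ Q x' y')

def innR : (α ⊕ (β ⊕ (γ ⊕ δ))) → (α ⊕ (β ⊕ (γ ⊕ δ))) → Prop := fun x y =>
  (∃ x' y' : β ⊕ γ, Sum.inr (Sum.map id Sum.inl x') = x ∧
      Sum.inr (Sum.map id Sum.inl y') = y ∧ Pr x' y') ∨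
  (∃ x' y' : γ ⊕ δ, Sum.inr (Sum.inr x') = x ∧ Sum.inr (Sum.inr y') = y ∧ Q x' y')

lemma innR_descend : ∀ x y, innR Pr Q x y →
    ∃ xf yf : β ⊕ (γ ⊕ δ), (Sum.inr xf : α ⊕ (β ⊕ (γ ⊕ δ))) = x ∧ (Sum.inr yf : α ⊕ (β ⊕ (γ ⊕ δ))) = y ∧
      innerR Pr Q xf yf := by
  rintro x y (⟨x', y', hx, hy, hP⟩ | ⟨x', y', hx, hy, hQ⟩)
  · exact ⟨Sum.map id Sum.inl x', Sum.map id Sum.inl y', hx, hy, Or.inl ⟨x', y', rfl, rfl, hP⟩⟩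
  · exact ⟨Sum.inr x', Sum.inr y', hx, hy, Or.inr ⟨x', y', rfl, rfl, hQ⟩⟩

lemma hclassR : ∀ z : α ⊕ (β ⊕ (γ ⊕ δ)),
    (∃ z₀ : α ⊕ (β ⊕ δ), Sum.map id (Sum.map id Sum.inr) z₀ = z) ∨
    (∃ c : γ, Sum.inr (Sum.inr (Sum.inl c)) = z) := by
  rintro (a | b | c | d)
  · exact Or.inl ⟨Sum.inl a, rfl⟩
  · exact Or.inl ⟨Sum.inr (Sum.inl b), rfl⟩
  · exact Or.inr ⟨c, rfl⟩
  · exact Or.inl ⟨Sum.inr (Sum.inr d), rfl⟩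

lemma hTTR : ∀ x z, bigStep R Pr Q x z → ∀ (x₀ z₀ : α ⊕ (β ⊕ δ)),
    Sum.map id (Sum.map id Sum.inr) x₀ = x → Sum.map id (Sum.map id Sum.inr) z₀ = z →
    stepR R Pr Q x₀ z₀ := by
  rintro x z (⟨x', y', rfl, rfl, hR⟩ | ⟨x', y', rfl, rfl, hP⟩ | ⟨x', y', rfl, rfl, hQ⟩) x₀ z₀ hx hz
  · obtain rfl : x₀ = Sum.map id Sum.inl x' := by
      rcases x₀ with a | b | d <;> rcases x' with a' | b' <;> simp_all
    obtain rfl : z₀ = Sum.map id Sum.inl y' := by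
      rcases z₀ with a | b | d <;> rcases y' with a' | b' <;> simp_all
    exact Or.inl ⟨x', y', rfl, rfl, hR⟩
  · obtain ⟨b, rfl, rfl⟩ : ∃ b, x' = Sum.inl b ∧ x₀ = Sum.inr (Sum.inl b) := by
      rcases x₀ with a | b | d <;> rcases x' with b' | c' <;> simp_all
    obtain ⟨b', rfl, rfl⟩ : ∃ b', y' = Sum.inl b' ∧ z₀ = Sum.inr (Sum.inl b') := by
      rcases z₀ with a | b | d <;> rcases y' with b' | c' <;> simp_all
    exact Or.inr ⟨Sum.inl b, Sum.inl b', rfl, rfl,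
      Relation.TransGen.single (Or.inl ⟨Sum.inl b, Sum.inl b', rfl, rfl, hP⟩)⟩
  · obtain ⟨d, rfl, rfl⟩ : ∃ d, x' = Sum.inr d ∧ x₀ = Sum.inr (Sum.inr d) := by
      rcases x₀ with a | b | d <;> rcases x' with c' | d' <;> simp_all
    obtain ⟨d', rfl, rfl⟩ : ∃ d', y' = Sum.inr d' ∧ z₀ = Sum.inr (Sum.inr d') := by
      rcases z₀ with a | b | d <;> rcases y' with c' | d' <;> simp_all
    exact Or.inr ⟨Sum.inr d, Sum.inr d', rfl, rfl,
      Relation.TransGen.single (Or.inr ⟨Sum.inr d, Sum.inr d', rfl, rfl, hQ⟩)⟩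

lemma hHIR : ∀ x z, bigStep R Pr Q x z →
    ((∃ c : γ, Sum.inr (Sum.inr (Sum.inl c)) = x) ∨
     (∃ c : γ, Sum.inr (Sum.inr (Sum.inl c)) = z)) →
    innR Pr Q x z := by
  rintro x z (⟨x', y', rfl, rfl, hR⟩ | ⟨x', y', rfl, rfl, hP⟩ | ⟨x', y', rfl, rfl, hQ⟩) hid
  · exfalso
    rcases hid with ⟨c, hc⟩ | ⟨c, hc⟩
    · rcases x' with a | b <;> simp at hc
    · rcases y' with a | b <;> simp at hc
  · exact Or.inl ⟨x', y', rfl, rfl, hP⟩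
  · exact Or.inr ⟨x', y', rfl, rfl, hQ⟩

lemma hcolR : ∀ (x₀ w : α ⊕ (β ⊕ δ)),
    Relation.TransGen (innR Pr Q)
      (Sum.map id (Sum.map id Sum.inr) x₀) (Sum.map id (Sum.map id Sum.inr) w) →
    stepR R Pr Q x₀ w := by
  intro x₀ w h
  obtain ⟨x', rfl, hjx⟩ : ∃ x' : β ⊕ δ, x₀ = Sum.inr x' ∧
      Sum.map id (Sum.map id Sum.inr) x₀ =
        (Sum.inr (Sum.map id Sum.inr x') : α ⊕ (β ⊕ (γ ⊕ δ))) := by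
    rcases x₀ with a | b | d
    · exfalso
      obtain ⟨zz, hstep, -⟩ := Relation.TransGen.head'_iff.1 h
      rcases hstep with ⟨x'', y'', hx, -, -⟩ | ⟨x'', y'', hx, -, -⟩ <;> simp at hx
    · exact ⟨Sum.inl b, rfl, rfl⟩
    · exact ⟨Sum.inr d, rfl, rfl⟩
  obtain ⟨yf, hyf, htg⟩ := descend (Sum.inr_injective) (innR_descend Pr Q) h
    (Sum.map id Sum.inr x') hjx.symm
  obtain ⟨w', rfl, rfl⟩ : ∃ w' : β ⊕ δ, w = Sum.inr w' ∧ yf = Sum.map id Sum.inr w' := by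
    rcases w with a | b | d
    · exfalso; simp at hyf
    · refine ⟨Sum.inl b, rfl, ?_⟩
      rcases yf with b0 | c0 | d0 <;> simp_all
    · refine ⟨Sum.inr d, rfl, ?_⟩
      rcases yf with b0 | c0 | d0 <;> simp_all
  exact Or.inr ⟨x', w', rfl, rfl, htg⟩

lemma hliftR : ∀ x₀ y₀ : α ⊕ (β ⊕ δ), stepR R Pr Q x₀ y₀ →
    Relation.TransGen (bigStep R Pr Q)
      (Sum.map id (Sum.map id Sum.inr) x₀) (Sum.map id (Sum.map id Sum.inr) y₀) := by
  rintro x₀ y₀ (⟨x', y', rfl, rfl, hR⟩ | ⟨x', y', rfl, rfl, hS⟩)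
  · have e1 : (Sum.map id (Sum.map id Sum.inr) (Sum.map id Sum.inl x' : α ⊕ (β ⊕ δ)) :
        α ⊕ (β ⊕ (γ ⊕ δ))) = Sum.map id Sum.inl x' := by cases x' <;> rfl
    have e2 : (Sum.map id (Sum.map id Sum.inr) (Sum.map id Sum.inl y' : α ⊕ (β ⊕ δ)) :
        α ⊕ (β ⊕ (γ ⊕ δ))) = Sum.map id Sum.inl y' := by cases y' <;> rfl
    rw [e1, e2]
    exact .single (Or.inl ⟨x', y', rfl, rfl, hR⟩)
  · have hS' : Relation.TransGen (innerR Pr Q) (Sum.map id Sum.inr x') (Sum.map id Sum.inr y') := hS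
    have hmain : Relation.TransGen (bigStep R Pr Q)
        (Sum.inr (Sum.map id Sum.inr x') : α ⊕ (β ⊕ (γ ⊕ δ)))
        (Sum.inr (Sum.map id Sum.inr y')) := by
      refine Relation.TransGen.lift' Sum.inr ?_ _ _ hS'
      rintro a b (⟨x'', y'', rfl, rfl, hP⟩ | ⟨x'', y'', rfl, rfl, hQ⟩)
      · exact .single (Or.inr (Or.inl ⟨x'', y'', rfl, rfl, hP⟩))
      · exact .single (Or.inr (Or.inr ⟨x'', y'', rfl, rfl, hQ⟩))
    exact hmain

lemma rhs_iff (u v : α ⊕ δ) : splitComp (splitComp Q Pr) R u v ↔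
    Relation.TransGen (bigStep R Pr Q)
      (Sum.map id (fun d => Sum.inr (Sum.inr d)) u)
      (Sum.map id (fun d => Sum.inr (Sum.inr d)) v) := by
  have hs := sandwich (S := bigStep R Pr Q) (I := innR Pr Q) (T := stepR R Pr Q)
    (j := Sum.map id (Sum.map id Sum.inr))
    (Hid := fun z => ∃ c : γ, Sum.inr (Sum.inr (Sum.inl c)) = z)
    (hclassR) (hTTR R Pr Q) (hHIR R Pr Q) (hcolR R Pr Q) (hliftR R Pr Q)
    (Sum.map id Sum.inr u) (Sum.map id Sum.inr v)
  have e1 : (Sum.map id (Sum.map id Sum.inr) (Sum.map id Sum.inr u : α ⊕ (β ⊕ δ)) :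
      α ⊕ (β ⊕ (γ ⊕ δ))) = Sum.map id (fun d => Sum.inr (Sum.inr d)) u := by cases u <;> rfl
  have e2 : (Sum.map id (Sum.map id Sum.inr) (Sum.map id Sum.inr v : α ⊕ (β ⊕ δ)) :
      α ⊕ (β ⊕ (γ ⊕ δ))) = Sum.map id (fun d => Sum.inr (Sum.inr d)) v := by cases v <;> rfl
  rw [e1, e2] at hs
  exact hs

theorem splitComp_assoc :
    splitComp Q (splitComp Pr R) = splitComp (splitComp Q Pr) R := by
  funext u v
  exact propext ((lhs_iff R Pr Q u v).trans (rhs_iff R Pr Q u v).symm)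

end Assoc2

lemma transGen_of_transitive {α : Type*} {r : α → α → Prop} (ht : Transitive r) {a b : α}
    (h : Relation.TransGen r a b) : r a b := by
  induction h with
  | single h => exact h
  | tail _ h ih => exact ht ih h

lemma splitComp_diag_right {α β : Type*} (R : α ⊕ β → α ⊕ β → Prop) (hR : Equivalence R) :
    splitComp R (fun u v : α ⊕ α => Sum.elim id id u = Sum.elim id id v) = R := by
  funext u v
  apply propext
  constructor
  · intro h
    have key : ∀ x y : α ⊕ (α ⊕ β),
        ((∃ x' y' : α ⊕ α, Sum.map id Sum.inl x' = x ∧ Sum.map id Sum.inl y' = y ∧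
            Sum.elim id id x' = Sum.elim id id y') ∨
         (∃ x' y' : α ⊕ β, Sum.inr x' = x ∧ Sum.inr y' = y ∧ R x' y')) →
        R (Sum.elim Sum.inl id x) (Sum.elim Sum.inl id y) := by
      rintro x y (⟨x', y', rfl, rfl, hid⟩ | ⟨x', y', rfl, rfl, hr⟩)
      · have e : ∀ z : α ⊕ α, Sum.elim Sum.inl id (Sum.map id Sum.inl z) =
            (Sum.inl (Sum.elim id id z) : α ⊕ β) := by rintro (a | a) <;> rfl
        rw [e, e, hid]
        exact hR.refl _
      · exact hr
    have h2 := transGen_of_transitive (r := R) (fun _ _ _ h1 h2 => hR.trans h1 h2)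
      (Relation.TransGen.lift (p := R) (Sum.elim Sum.inl id) (fun a b hab => key a b hab) _ _ h)
    have e1 : ∀ w : α ⊕ β, Sum.elim Sum.inl id (Sum.map id Sum.inr w) = w := by
      rintro (a | b) <;> rfl
    rwa [e1, e1] at h2
  · intro h
    rcases u with a | b <;> rcases v with a' | b'
    · exact .head (Or.inl ⟨Sum.inl a, Sum.inr a, rfl, rfl, rfl⟩)
        (.head (Or.inr ⟨Sum.inl a, Sum.inl a', rfl, rfl, h⟩)
          (.single (Or.inl ⟨Sum.inr a', Sum.inl a', rfl, rfl, rfl⟩)))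
    · exact .head (Or.inl ⟨Sum.inl a, Sum.inr a, rfl, rfl, rfl⟩)
        (.single (Or.inr ⟨Sum.inl a, Sum.inr b', rfl, rfl, h⟩))
    · exact .head (Or.inr ⟨Sum.inr b, Sum.inl a', rfl, rfl, h⟩)
        (.single (Or.inl ⟨Sum.inr a', Sum.inl a', rfl, rfl, rfl⟩))
    · exact .single (Or.inr ⟨Sum.inr b, Sum.inr b', rfl, rfl, h⟩)

lemma splitComp_diag_left {α β : Type*} (R : α ⊕ β → α ⊕ β → Prop) (hR : Equivalence R) :
    splitComp (fun u v : β ⊕ β => Sum.elim id id u = Sum.elim id id v) R = R := by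
  funext u v
  apply propext
  constructor
  · intro h
    have key : ∀ x y : α ⊕ (β ⊕ β),
        ((∃ x' y' : α ⊕ β, Sum.map id Sum.inl x' = x ∧ Sum.map id Sum.inl y' = y ∧ R x' y') ∨
         (∃ x' y' : β ⊕ β, Sum.inr x' = x ∧ Sum.inr y' = y ∧
            Sum.elim id id x' = Sum.elim id id y')) →
        R (Sum.map id (Sum.elim id id) x) (Sum.map id (Sum.elim id id) y) := by
      rintro x y (⟨x', y', rfl, rfl, hr⟩ | ⟨x', y', rfl, rfl, hid⟩)
      · have e : ∀ z : α ⊕ β, Sum.map id (Sum.elim id id) (Sum.map id Sum.inl z) = z := by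
          rintro (a | b) <;> rfl
        rwa [e, e]
      · have e : ∀ z : β ⊕ β, Sum.map id (Sum.elim id id) (Sum.inr z : α ⊕ (β ⊕ β)) =
            Sum.inr (Sum.elim id id z) := by rintro (b | b) <;> rfl
        rw [e, e, hid]
        exact hR.refl _
    have h2 := transGen_of_transitive (r := R) (fun _ _ _ h1 h2 => hR.trans h1 h2)
      (Relation.TransGen.lift (p := R) (Sum.map id (Sum.elim id id)) (fun a b hab => key a b hab) _ _ h)
    have e1 : ∀ w : α ⊕ β, Sum.map id (Sum.elim id id) (Sum.map id Sum.inr w) = w := by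
      rintro (a | b) <;> rfl
    rwa [e1, e1] at h2
  · intro h
    rcases u with a | b <;> rcases v with a' | b'
    · exact .single (Or.inl ⟨Sum.inl a, Sum.inl a', rfl, rfl, h⟩)
    · exact .head (Or.inl ⟨Sum.inl a, Sum.inr b', rfl, rfl, h⟩)
        (.single (Or.inr ⟨Sum.inl b', Sum.inr b', rfl, rfl, rfl⟩))
    · exact .head (Or.inr ⟨Sum.inr b, Sum.inl b, rfl, rfl, rfl⟩)
        (.single (Or.inl ⟨Sum.inr b, Sum.inl a', rfl, rfl, h⟩))
    · exact .head (Or.inr ⟨Sum.inr b, Sum.inl b, rfl, rfl, rfl⟩)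
        (.head (Or.inl ⟨Sum.inr b, Sum.inr b', rfl, rfl, h⟩)
          (.single (Or.inr ⟨Sum.inl b', Sum.inr b', rfl, rfl, rfl⟩)))

/-- The finite ordinals as objects, with Brauerian split equivalences `R : m ⊢ n`
as arrows, composition `∗`, and the identity on `n` given by the split equivalence
whose classes are `{m_s, m_t}` for `m < n`, form a category `Br`: the identities
are Brauerian split equivalences, composition `∗` is associative, and the
identities are neutral for `∗`. -/
theorem br_is_category :
    (∀ n : ℕ, IsBrSplitEquiv (brId n)) ∧
    (∀ (m n k l : ℕ)
      (R : Fin m ⊕ Fin n → Fin m ⊕ Fin n → Prop)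
      (Pr : Fin n ⊕ Fin k → Fin n ⊕ Fin k → Prop)
      (Q : Fin k ⊕ Fin l → Fin k ⊕ Fin l → Prop),
      IsBrSplitEquiv R → IsBrSplitEquiv Pr → IsBrSplitEquiv Q →
      splitComp Q (splitComp Pr R) = splitComp (splitComp Q Pr) R) ∧
    (∀ (m n : ℕ) (R : Fin m ⊕ Fin n → Fin m ⊕ Fin n → Prop),
      IsBrSplitEquiv R →
      splitComp R (brId m) = R ∧ splitComp (brId n) R = R) := by
  refine ⟨?_, ?_, ?_⟩
  · intro n
    refine ⟨⟨fun _ => rfl, Eq.symm, Eq.trans⟩, ?_⟩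
    rintro (x | x)
    · refine ⟨Sum.inr x, by simp, rfl, ?_⟩
      rintro (y | y) hc
      · have hxy : x = y := hc
        exact Or.inl (by rw [hxy])
      · have hxy : x = y := hc
        exact Or.inr (by rw [hxy])
    · refine ⟨Sum.inl x, by simp, rfl, ?_⟩
      rintro (y | y) hc
      · have hxy : x = y := hc
        exact Or.inr (by rw [hxy])
      · have hxy : x = y := hc
        exact Or.inl (by rw [hxy])
  · intro m n k l R Pr Q _ _ _
    exact splitComp_assoc R Pr Q
  · intro m n R hR
    exact ⟨splitComp_diag_right R hR.1, splitComp_diag_left R hR.1⟩
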